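/- Let R be a ring with unit and M a finitely presented right R-module. Then the natural map Φ_M : M ⊗_R R((z)) → M((z)), m ⊗ Σ_{i≥k} r_i z^i ↦ Σ_{i≥k} m r_i z^i, is an R((z))-linear isomorphism. -/

import Mathlib

noncomputable section
open scoped TensorProduct

namespace Novikov
variable (Γ : Type*) [AddCommGroup Γ] [LinearOrder Γ] [IsOrderedAddMonoid Γ] (R : Type*) [CommRing R]

/-- `R((z))` acting on itself commutes with the `R`-action. -/
instance : SMulCommClass R (HahnSeries Γ R) (HahnSeries Γ R) where
  smul_comm r x y := by
    rw [← HahnSeries.C_mul_eq_smul, ← HahnSeries.C_mul_eq_smul, smul_eq_mul, smul_eq_mul,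
      mul_left_comm]

variable (M : Type*) [AddCommGroup M] [Module R M]

/-- The formal series `Σ_i (r_i • m) z^i`, for `f = Σ_i r_i z^i`. -/
def phiSeries (f : HahnSeries Γ R) (m : M) : HahnSeries Γ M :=
  ⟨fun i => f.coeff i • m, f.isPWO_support.mono (fun i hi h => by
    simp only [Function.mem_support] at hi
    exact hi (by rw [h, zero_smul]))⟩

@[simp] lemma phiSeries_coeff (f : HahnSeries Γ R) (m : M) (i : Γ) :
    (phiSeries Γ R M f m).coeff i = f.coeff i • m := rfl

/-- The natural map `M ⊗_R R((z)) → M((z))`, `m ⊗ Σ r_i z^i ↦ Σ (m r_i) z^i`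
(written with the scalar factor on the left, as is usual for base change). -/
def Phi : HahnSeries Γ R ⊗[R] M →ₗ[R] HahnSeries Γ M :=
  TensorProduct.lift
    { toFun := fun f =>
        { toFun := phiSeries Γ R M f
          map_add' := fun m m' => by
            ext i; simp only [phiSeries_coeff, HahnSeries.coeff_add, smul_add]
          map_smul' := fun r m => by
            ext i; simp only [phiSeries_coeff, RingHom.id_apply, HahnSeries.coeff_smul,
              smul_comm r] }
      map_add' := fun f g => by
        ext m i
        simp only [LinearMap.coe_mk, AddHom.coe_mk, LinearMap.add_apply, phiSeries_coeff,
          HahnSeries.coeff_add, add_smul]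
      map_smul' := fun r f => by
        ext m i
        simp only [LinearMap.coe_mk, AddHom.coe_mk, RingHom.id_apply, LinearMap.smul_apply,
          phiSeries_coeff, HahnSeries.coeff_smul, smul_assoc] }

@[simp] lemma Phi_tmul (f : HahnSeries Γ R) (m : M) :
    Phi Γ R M (f ⊗ₜ[R] m) = phiSeries Γ R M f m := rfl

lemma phiSeries_eq_smul_single (f : HahnSeries Γ R) (m : M) :
    HahnModule.of R (phiSeries Γ R M f m) = f • HahnModule.of R (HahnSeries.single 0 m) := by
  apply (HahnModule.of R).symm.injective
  ext i
  rw [Equiv.symm_apply_apply]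
  rw [HahnModule.coeff_smul_right (Set.isPWO_singleton (0:Γ))
    (by rw [Equiv.symm_apply_apply]; exact HahnSeries.support_single_subset)]
  simp only [Equiv.symm_apply_apply, phiSeries_coeff]
  by_cases hf : f.coeff i = 0
  · rw [hf, zero_smul]
    symm
    apply Finset.sum_eq_zero
    rintro ⟨j, k⟩ hjk
    simp only [Finset.mem_vaddAntidiagonal, Set.mem_singleton_iff] at hjk
    obtain ⟨hj, hk, hjki⟩ := hjk
    subst hk
    rw [vadd_eq_add, add_zero] at hjki
    subst hjki
    exact absurd hf hj
  · rw [Finset.sum_eq_single (i, (0:Γ))]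
    · simp
    · rintro ⟨j, k⟩ hjk hne
      simp only [Finset.mem_vaddAntidiagonal, Set.mem_singleton_iff] at hjk
      obtain ⟨hj, hk, hjki⟩ := hjk
      subst hk
      rw [vadd_eq_add, add_zero] at hjki
      exact absurd (by rw [hjki]) hne
    · intro hni
      rw [Finset.mem_vaddAntidiagonal] at hni
      push_neg at hni
      simp only [Set.mem_singleton_iff, HahnSeries.mem_support] at hni
      exact absurd (by rw [vadd_eq_add, add_zero]) (hni hf trivial)

variable {N : Type*} [AddCommGroup N] [Module R N]

/-- Coefficientwise application of a linear map to a Hahn series. -/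
def hmap (l : M →ₗ[R] N) : HahnSeries Γ M →ₗ[R] HahnSeries Γ N where
  toFun x := ⟨fun i => l (x.coeff i), x.isPWO_support.mono (fun i hi h => by
    simp only [Function.mem_support] at hi ⊢
    exact hi (by rw [h, map_zero]))⟩
  map_add' x y := by ext i; simp
  map_smul' r x := by ext i; simp

@[simp] lemma hmap_coeff (l : M →ₗ[R] N) (x : HahnSeries Γ M) (i : Γ) :
    (hmap Γ R M l x).coeff i = l (x.coeff i) := rfl

lemma hmap_lift (l : M →ₗ[R] N) (x : HahnSeries Γ N)
    (h : ∀ i, x.coeff i ∈ LinearMap.range l) : ∃ y, hmap Γ R M l y = x := by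
  classical
  refine ⟨⟨fun i => if hx : x.coeff i = 0 then 0 else (h i).choose,
    x.isPWO_support.mono (fun i hi => ?_)⟩, ?_⟩
  · simp only [Function.mem_support] at hi ⊢
    intro h0
    exact hi (by rw [dif_pos h0])
  · ext i
    simp only [hmap_coeff]
    by_cases hx : x.coeff i = 0
    · simp [hx]
    · simp only [dif_neg hx]
      exact (h i).choose_spec

lemma hmap_comp_Phi (l : M →ₗ[R] N) :
    (hmap Γ R M l) ∘ₗ (Phi Γ R M) = (Phi Γ R N) ∘ₗ (LinearMap.lTensor (HahnSeries Γ R) l) := by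
  apply TensorProduct.ext'
  intro f m
  ext i
  simp

/-- Candidate inverse to `Phi` over a finite free module. -/
def psi (n : ℕ) : HahnSeries Γ (Fin n → R) →ₗ[R] HahnSeries Γ R ⊗[R] (Fin n → R) :=
  ∑ j : Fin n, (TensorProduct.mk R (HahnSeries Γ R) (Fin n → R)).flip (Pi.single j 1) ∘ₗ
    hmap Γ R (Fin n → R) (LinearMap.proj j)

lemma coeff_sum {α : Type*} (s : Finset α) (F : α → HahnSeries Γ M) (i : Γ) :
    (∑ a ∈ s, F a).coeff i = ∑ a ∈ s, (F a).coeff i :=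
  map_sum (HahnSeries.coeff.addMonoidHom i) F s

lemma phi_psi (n : ℕ) (x : HahnSeries Γ (Fin n → R)) :
    Phi Γ R (Fin n → R) (psi Γ R n x) = x := by
  classical
  ext i
  rw [psi, LinearMap.sum_apply, map_sum, coeff_sum]
  simp only [LinearMap.comp_apply, LinearMap.flip_apply, TensorProduct.mk_apply, Phi_tmul,
    phiSeries_coeff, hmap_coeff, LinearMap.proj_apply]
  have : ∀ j : Fin n, x.coeff i j • (Pi.single j 1 : Fin n → R) = Pi.single j (x.coeff i j) := by
    intro j
    rw [← Pi.single_smul', smul_eq_mul, mul_one]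
  simp_rw [this]
  exact congrFun (Finset.univ_sum_single (x.coeff i)) _

lemma psi_phi (n : ℕ) (t : HahnSeries Γ R ⊗[R] (Fin n → R)) :
    psi Γ R n (Phi Γ R (Fin n → R) t) = t := by
  classical
  induction t using TensorProduct.induction_on with
  | zero => rw [LinearMap.map_zero, LinearMap.map_zero]
  | add x y hx hy => simp [map_add, hx, hy]
  | tmul f m =>
    simp only [Phi_tmul, psi, LinearMap.sum_apply, LinearMap.comp_apply, LinearMap.flip_apply,
      TensorProduct.mk_apply]
    have h1 : ∀ j : Fin n, hmap Γ R (Fin n → R) (LinearMap.proj j) (phiSeries Γ R (Fin n → R) f m)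
        = m j • f := by
      intro j
      ext i
      simp [mul_comm]
    have h2 : ∀ j : Fin n, (m j • f) ⊗ₜ[R] (Pi.single j 1 : Fin n → R)
        = f ⊗ₜ[R] (Pi.single j (m j) : Fin n → R) := by
      intro j
      rw [TensorProduct.smul_tmul, ← Pi.single_smul', smul_eq_mul, mul_one]
    simp_rw [h1, h2]
    rw [← TensorProduct.tmul_sum, Finset.univ_sum_single]

lemma phi_bijective_pi (n : ℕ) : Function.Bijective (Phi Γ R (Fin n → R)) :=
  ⟨Function.LeftInverse.injective (psi_phi Γ R n),
    Function.RightInverse.surjective (phi_psi Γ R n)⟩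

lemma phi_bijective [Module.FinitePresentation R M] : Function.Bijective (Phi Γ R M) := by
  classical
  obtain ⟨n, p, hp⟩ := Module.Finite.exists_fin' R M
  have hker : (LinearMap.ker p).FG := Module.FinitePresentation.fg_ker p hp
  obtain ⟨m, s, hs⟩ := Submodule.fg_iff_exists_fin_generating_family.mp hker
  set q : (Fin m → R) →ₗ[R] (Fin n → R) := Fintype.linearCombination R s with hq
  have hrange : LinearMap.range q = LinearMap.ker p := by
    rw [hq, Fintype.range_linearCombination, hs]
  constructor
  · rw [injective_iff_map_eq_zero]
    intro t ht
    obtain ⟨u, rfl⟩ := LinearMap.lTensor_surjective (HahnSeries Γ R) hp t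
    have h0 : hmap Γ R (Fin n → R) p (Phi Γ R (Fin n → R) u) = 0 := by
      rw [← LinearMap.comp_apply, hmap_comp_Phi, LinearMap.comp_apply, ht]
    have hco : ∀ i, (Phi Γ R (Fin n → R) u).coeff i ∈ LinearMap.range q := by
      intro i
      rw [hrange, LinearMap.mem_ker]
      have := congrArg (fun z => z.coeff i) h0
      simpa using this
    obtain ⟨y, hy⟩ := hmap_lift Γ R (Fin m → R) q _ hco
    obtain ⟨v, rfl⟩ := (phi_bijective_pi Γ R m).surjective y
    have heq : Phi Γ R (Fin n → R) (LinearMap.lTensor (HahnSeries Γ R) q v)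
        = Phi Γ R (Fin n → R) u := by
      rw [← LinearMap.comp_apply, ← hmap_comp_Phi, LinearMap.comp_apply, hy]
    have huv := (phi_bijective_pi Γ R n).injective heq
    have hpq : p ∘ₗ q = 0 := by
      apply LinearMap.ext
      intro z
      have : q z ∈ LinearMap.ker p := hrange ▸ LinearMap.mem_range_self q z
      simpa using this
    rw [← huv, ← LinearMap.comp_apply, ← LinearMap.lTensor_comp, hpq]
    simp
  · intro x
    have hco : ∀ i, x.coeff i ∈ LinearMap.range p := fun i => by
      rw [LinearMap.range_eq_top.mpr hp]; trivial
    obtain ⟨y, hy⟩ := hmap_lift Γ R (Fin n → R) p x hco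
    obtain ⟨t, rfl⟩ := (phi_bijective_pi Γ R n).surjective y
    exact ⟨LinearMap.lTensor (HahnSeries Γ R) p t, by
      rw [← LinearMap.comp_apply, ← hmap_comp_Phi, LinearMap.comp_apply, hy]⟩

/-- `Phi` as a `HahnSeries Γ R`-linear map into the Hahn module. -/
def PhiL : HahnSeries Γ R ⊗[R] M →ₗ[HahnSeries Γ R] HahnModule Γ R M where
  toFun t := HahnModule.of R (Phi Γ R M t)
  map_add' a b := by
    apply (HahnModule.of R).symm.injective
    simp [map_add]
  map_smul' g t := by
    induction t using TensorProduct.induction_on with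
    | zero => simp
    | add x y hx hy =>
      show HahnModule.of R (Phi Γ R M (g • (x + y)))
          = g • HahnModule.of R (Phi Γ R M (x + y))
      rw [smul_add, map_add (Phi Γ R M) (g • x) (g • y), map_add (Phi Γ R M) x y]
      show HahnModule.of R (Phi Γ R M (g • x)) + HahnModule.of R (Phi Γ R M (g • y))
          = g • (HahnModule.of R (Phi Γ R M x) + HahnModule.of R (Phi Γ R M y))
      rw [smul_add]
      exact congrArg₂ (· + ·) hx hy
    | tmul f m =>
      rw [TensorProduct.smul_tmul', smul_eq_mul, RingHom.id_apply]
      simp only [Phi_tmul]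
      rw [phiSeries_eq_smul_single, phiSeries_eq_smul_single, mul_smul]

end Novikov

open Novikov in
/-- For a finitely presented right `R`-module `M`, the natural map
`Φ_M : M ⊗_R R((z)) → M((z))`, `m ⊗ Σ r_i z^i ↦ Σ (m r_i) z^i`, is an `R((z))`-linear
isomorphism. -/
theorem finitePresentation_tensor_laurentSeries_iso
    (R : Type*) [CommRing R] (M : Type*) [AddCommGroup M] [Module R M]
    [Module.FinitePresentation R M] :
    ∃ e : (LaurentSeries R ⊗[R] M) ≃ₗ[LaurentSeries R] HahnModule ℤ R M,
      ∀ (f : LaurentSeries R) (m : M),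
        (HahnModule.of R).symm (e (f ⊗ₜ[R] m)) = phiSeries ℤ R M f m := by
  have hbij : Function.Bijective (PhiL ℤ R M) :=
    (HahnModule.of (V := M) (Γ := ℤ) R).bijective.comp (phi_bijective ℤ R M)
  refine ⟨LinearEquiv.ofBijective (PhiL ℤ R M) hbij, fun f m => ?_⟩
  show (HahnModule.of R).symm (HahnModule.of R (Phi ℤ R M (f ⊗ₜ[R] m))) = _
  rw [Equiv.symm_apply_apply, Phi_tmul]
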